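/- arXiv:0806.2902 — 2 statements merged into one kernel-verified Lean document; each statement's English description precedes it below -/
import Mathlib

section
/- Define p₂ : S × S → SU(2) by p₂(A₁, A₂) = A₁·A₂, where S is the set of trace-zero matrices in SU(2). If A₁ ≠ A₂ and A₁ ≠ -A₂, then p₂ is a submersion at (A₁, A₂); equivalently, the differential of p₂ at (A₁, A₂) has rank 3. -/
open Matrix Complex
open scoped Matrix ComplexConjugate

noncomputable section SU2Aux

/-- Coordinates on su(2). -/
def su2coords (u : Matrix (Fin 2) (Fin 2) ℂ) : Fin 3 → ℝ :=
  ![(u 0 0).im, (u 0 1).re, (u 0 1).im]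

/-- Embedding of ℝ³ into 2×2 complex matrices hitting su(2). -/
def phiL : (Fin 3 → ℝ) →ₗ[ℝ] Matrix (Fin 2) (Fin 2) ℂ where
  toFun x := !![(x 0 : ℂ) * I, (x 1 : ℂ) + (x 2 : ℂ) * I;
                -(x 1 : ℂ) + (x 2 : ℂ) * I, -((x 0 : ℂ) * I)]
  map_add' x y := by
    ext i j
    fin_cases i <;> fin_cases j <;>
      simp [Matrix.add_apply] <;> push_cast <;> ring
  map_smul' c x := by
    ext i j
    fin_cases i <;> fin_cases j <;>
      simp [Matrix.smul_apply, Complex.real_smul] <;> push_cast <;> ring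

lemma star_phiL (x : Fin 3 → ℝ) : star (phiL x) = -(phiL x) := by
  ext i j
  fin_cases i <;> fin_cases j <;>
    simp [phiL, Matrix.star_apply, Complex.ext_iff]

lemma trace_phiL (x : Fin 3 → ℝ) : (phiL x).trace = 0 := by
  simp [phiL, Matrix.trace_fin_two]

lemma trace_phiL_mul (x y : Fin 3 → ℝ) :
    (phiL x * phiL y).trace = ((-2 * (x ⬝ᵥ y) : ℝ) : ℂ) := by
  simp [phiL, Matrix.trace_fin_two, Matrix.mul_apply, Fin.sum_univ_two,
        dotProduct, Fin.sum_univ_three, Complex.ext_iff]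
  constructor <;> ring

lemma phiL_coords {u : Matrix (Fin 2) (Fin 2) ℂ}
    (h1 : star u = -u) (h2 : u.trace = 0) : phiL (su2coords u) = u := by
  have e00 := congrFun (congrFun h1 0) 0
  have e10 := congrFun (congrFun h1 1) 0
  have e11 : u 1 1 = -(u 0 0) := by
    have := h2
    rw [Matrix.trace_fin_two] at this
    linear_combination this
  simp [Matrix.star_apply, Complex.ext_iff] at e00 e10
  ext i j
  fin_cases i <;> fin_cases j
  · simp [phiL, su2coords, Complex.ext_iff]
    linarith [e00]
  · simp [phiL, su2coords, Complex.ext_iff]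
  · simp [phiL, su2coords, Complex.ext_iff, e11]
    constructor <;> linarith [e10.1, e10.2]
  · simp [phiL, su2coords, Complex.ext_iff, e11]
    linarith [e00]

lemma phiL_eq_zero {x : Fin 3 → ℝ} (h : phiL x = 0) : x = 0 := by
  have h0 := congrFun (congrFun h 0) 0
  have h1 := congrFun (congrFun h 0) 1
  simp [phiL, Complex.ext_iff] at h0 h1
  funext i
  fin_cases i <;> simp [h0, h1.1, h1.2]

/-- A trace-zero element of SU(2) is skew-Hermitian. -/
lemma su2_star_eq_neg {A : Matrix (Fin 2) (Fin 2) ℂ}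
    (hA : A ∈ Matrix.specialUnitaryGroup (Fin 2) ℂ) (htr : A.trace = 0) :
    star A = -A := by
  obtain ⟨hu, hdet⟩ := Matrix.mem_specialUnitaryGroup_iff.mp hA
  have h1 : A * star A = 1 := Matrix.mem_unitaryGroup_iff.mp hu
  have hinv : A⁻¹ = star A := Matrix.inv_eq_right_inv h1
  have hadj : A⁻¹ = A.adjugate := by
    rw [Matrix.inv_def, hdet]; simp
  have h11 : A 1 1 = -(A 0 0) := by
    rw [Matrix.trace_fin_two] at htr; linear_combination htr
  rw [hinv, Matrix.adjugate_fin_two] at hadj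
  rw [hadj]
  ext i j
  fin_cases i <;> fin_cases j <;> simp [h11]

lemma su2_sq {A : Matrix (Fin 2) (Fin 2) ℂ}
    (hA : A ∈ Matrix.specialUnitaryGroup (Fin 2) ℂ) (htr : A.trace = 0) :
    A * A = -1 := by
  obtain ⟨hu, hdet⟩ := Matrix.mem_specialUnitaryGroup_iff.mp hA
  have h1 : A * star A = 1 := Matrix.mem_unitaryGroup_iff.mp hu
  rw [su2_star_eq_neg hA htr, mul_neg] at h1
  have h2 : A * A = -(-(A * A)) := by rw [neg_neg]
  rw [h2, h1]




/-- The tangent space at `A` to the submanifold `S` of trace-zero matrices of `SU(2)`,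
described concretely: vectors `v` with `v * A⁻¹` skew-Hermitian and trace-free, and
`v` itself trace-free (the linearization of the trace-zero condition). -/
def tangentSetS (A : Matrix (Fin 2) (Fin 2) ℂ) : Set (Matrix (Fin 2) (Fin 2) ℂ) :=
  {v | star (v * A⁻¹) = -(v * A⁻¹) ∧ (v * A⁻¹).trace = 0 ∧ v.trace = 0}

/-- The map `p₂ : S × S → SU(2)`, `p₂(A₁,A₂) = A₁·A₂`, is a submersion at `(A₁,A₂)`
whenever `A₁ ≠ A₂` and `A₁ ≠ -A₂`: the image of its differential
`(v,w) ↦ v·A₂ + A₁·w` spans a real subspace of dimension `3` (the full tangent space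
of the 3-dimensional group `SU(2)` at `A₁·A₂`). -/
theorem p2_submersion_rank_three (A₁ A₂ : Matrix (Fin 2) (Fin 2) ℂ)
    (hA₁ : A₁ ∈ Matrix.specialUnitaryGroup (Fin 2) ℂ) (htr₁ : A₁.trace = 0)
    (hA₂ : A₂ ∈ Matrix.specialUnitaryGroup (Fin 2) ℂ) (htr₂ : A₂.trace = 0)
    (hne : A₁ ≠ A₂) (hne' : A₁ ≠ -A₂) :
    Module.finrank ℝ (Submodule.span ℝ
      {m : Matrix (Fin 2) (Fin 2) ℂ |
        ∃ v ∈ tangentSetS A₁, ∃ w ∈ tangentSetS A₂, m = v * A₂ + A₁ * w}) = 3 := by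
  classical
  have hs1 : star A₁ = -A₁ := su2_star_eq_neg hA₁ htr₁
  have hs2 : star A₂ = -A₂ := su2_star_eq_neg hA₂ htr₂
  have hq1 : A₁ * A₁ = -1 := su2_sq hA₁ htr₁
  have hq2 : A₂ * A₂ = -1 := su2_sq hA₂ htr₂
  have hinv1 : A₁⁻¹ = -A₁ := Matrix.inv_eq_right_inv (by rw [mul_neg, hq1, neg_neg])
  have hinv2 : A₂⁻¹ = -A₂ := Matrix.inv_eq_right_inv (by rw [mul_neg, hq2, neg_neg])
  set MS := {m : Matrix (Fin 2) (Fin 2) ℂ |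
        ∃ v ∈ tangentSetS A₁, ∃ w ∈ tangentSetS A₂, m = v * A₂ + A₁ * w} with hMS
  set P := A₁ * A₂ with hP
  set C := A₁ * A₂ * A₁ with hC
  have hl1 : ∀ X : Matrix (Fin 2) (Fin 2) ℂ, A₁ * (A₁ * X) = -X := fun X => by
    rw [← Matrix.mul_assoc, hq1, neg_mul, one_mul]
  have hl2 : ∀ X : Matrix (Fin 2) (Fin 2) ℂ, A₂ * (A₂ * X) = -X := fun X => by
    rw [← Matrix.mul_assoc, hq2, neg_mul, one_mul]
  have hCs : star C = -C := by
    simp [hC, Matrix.star_mul, hs1, hs2, mul_neg, neg_mul, Matrix.mul_assoc]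
  have hCt : C.trace = 0 := by
    rw [hC, Matrix.trace_mul_comm, ← Matrix.mul_assoc, hq1]
    simp [htr₂]
  set c₁ := su2coords A₁ with hc1def
  set c₂ := su2coords C with hc2def
  have hA1r : phiL c₁ = A₁ := phiL_coords hs1 htr₁
  have hCr : phiL c₂ = C := phiL_coords hCs hCt
  have htrone : (-1 : Matrix (Fin 2) (Fin 2) ℂ).trace = ((-2 : ℝ) : ℂ) := by
    simp

  have hd11 : c₁ ⬝ᵥ c₁ = 1 := by
    have h := trace_phiL_mul c₁ c₁
    rw [hA1r, hq1, htrone] at h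
    have h2 := Complex.ofReal_inj.mp h
    linarith
  have hCC : C * C = -1 := by
    have h : C * C = A₁ * (A₂ * (A₁ * (A₁ * (A₂ * A₁)))) := by
      rw [hC]; simp [Matrix.mul_assoc]
    rw [h, hl1, mul_neg, hl2, neg_neg, hq1]
  have hd22 : c₂ ⬝ᵥ c₂ = 1 := by
    have h := trace_phiL_mul c₂ c₂
    rw [hCr, hCC, htrone] at h
    have h2 := Complex.ofReal_inj.mp h
    linarith
  set t := c₁ ⬝ᵥ c₂ with htdef
  set n := c₁ ⨯₃ c₂ with hndef
  have hnn : n ⬝ᵥ n = 1 - t * t := by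
    rw [hndef, cross_dot_cross, hd11, hd22, dotProduct_comm c₂ c₁, ← htdef]
    ring
  have hn0 : n ⬝ᵥ n ≠ 0 := by
    intro h
    have ht2 : t * t = 1 := by rw [hnn] at h; linarith
    have hw : (c₂ - t • c₁) ⬝ᵥ (c₂ - t • c₁) = 0 := by
      simp [sub_dotProduct, dotProduct_sub, smul_dotProduct,
            dotProduct_smul, hd11, hd22, dotProduct_comm c₂ c₁, ← htdef,
            smul_eq_mul]
      linarith
    have hw0 : c₂ = t • c₁ := by
      have := dotProduct_self_eq_zero.mp hw
      rwa [sub_eq_zero] at this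
    have hCe : C = t • A₁ := by rw [← hCr, hw0, _root_.map_smul, hA1r]
    have h3 : A₁ * (A₁ * (A₂ * (A₁ * A₁))) = A₂ := by
      rw [hq1, hl1]; simp
    have h4 : A₂ = (-t) • A₁ := by
      have h5 : A₁ * (C * A₁) = A₂ := by
        rw [hC]
        rw [show A₁ * A₂ * A₁ * A₁ = A₁ * (A₂ * (A₁ * A₁)) by simp [Matrix.mul_assoc]]
        exact h3
      rw [hCe] at h5
      rw [← h5]
      rw [Matrix.smul_mul, Matrix.mul_smul, hq1]
      simp
    rcases mul_self_eq_one_iff.mp ht2 with h | h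
    · rw [h] at h4
      exact hne' (by rw [h4]; simp)
    · rw [h] at h4
      exact hne (by rw [h4]; simp)
  have hdc1n : c₁ ⬝ᵥ n = 0 := dot_self_cross c₁ c₂
  have hdc2n : c₂ ⬝ᵥ n = 0 := dot_cross_self c₁ c₂
  -- the linear map y ↦ phiL y * P
  set L : (Fin 3 → ℝ) →ₗ[ℝ] Matrix (Fin 2) (Fin 2) ℂ :=
    { toFun := fun y => phiL y * P
      map_add' := fun a b => by simp [add_mul]
      map_smul' := fun c a => by simp [Matrix.smul_mul] } with hLdef
  have hLapp : ∀ y, L y = phiL y * P := fun _ => rfl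
  have hPQ : P * (A₂ * A₁) = 1 := by
    rw [hP, Matrix.mul_assoc, hl2, mul_neg, hq1, neg_neg]
  have hLinj : LinearMap.ker L = ⊥ := by
    rw [LinearMap.ker_eq_bot']
    intro y hy
    rw [hLapp] at hy
    have h2 : phiL y = phiL y * P * (A₂ * A₁) := by
      rw [Matrix.mul_assoc, hPQ, mul_one]
    rw [hy, Matrix.zero_mul] at h2
    exact phiL_eq_zero h2
  set x : Fin 3 → (Fin 3 → ℝ) := ![n, c₁ ⨯₃ n, c₂ ⨯₃ n] with hx
  have hli : LinearIndependent ℝ x := by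
    rw [Fintype.linearIndependent_iff]
    intro g hg
    rw [Fin.sum_univ_three] at hg
    have hg' : g 0 • n + g 1 • (c₁ ⨯₃ n) + g 2 • (c₂ ⨯₃ n) = 0 := by
      simpa [hx] using hg
    have haux1 : (c₁ ⨯₃ n) ⬝ᵥ n = 0 := by
      rw [dotProduct_comm]; exact dot_cross_self c₁ n
    have haux2 : (c₂ ⨯₃ n) ⬝ᵥ n = 0 := by
      rw [dotProduct_comm]; exact dot_cross_self c₂ n
    have h0 : g 0 * (n ⬝ᵥ n) = 0 := by
      have h := congrArg (fun v => v ⬝ᵥ n) hg'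
      simpa [add_dotProduct, smul_dotProduct, smul_eq_mul,
             haux1, haux2] using h
    have hg0 : g 0 = 0 := by
      rcases mul_eq_zero.mp h0 with h | h
      · exact h
      · exact absurd h hn0
    rw [hg0, zero_smul, zero_add] at hg'
    set q := g 1 • c₁ + g 2 • c₂ with hqdef
    have hqn : q ⨯₃ n = 0 := by
      have h : q ⨯₃ n = g 1 • (c₁ ⨯₃ n) + g 2 • (c₂ ⨯₃ n) := by
        simp [hqdef, map_add, _root_.map_smul, LinearMap.add_apply, LinearMap.smul_apply]
      rw [h, hg']
    have hqdn : q ⬝ᵥ n = 0 := by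
      simp [hqdef, add_dotProduct, smul_dotProduct, hdc1n, hdc2n]
    have hqq : q ⬝ᵥ q = 0 := by
      have hl := cross_dot_cross q n q n
      rw [hqn, zero_dotProduct, hqdn, dotProduct_comm n q, hqdn] at hl
      have h2 : q ⬝ᵥ q * (n ⬝ᵥ n) = 0 := by linarith
      rcases mul_eq_zero.mp h2 with h | h
      · exact h
      · exact absurd h hn0
    have hq0 : q = 0 := dotProduct_self_eq_zero.mp hqq
    have e1 : g 1 + g 2 * t = 0 := by
      have h := congrArg (fun v => v ⬝ᵥ c₁) hq0
      simpa [hqdef, add_dotProduct, smul_dotProduct, smul_eq_mul,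
             hd11, dotProduct_comm c₂ c₁, ← htdef] using h
    have e2 : g 1 * t + g 2 = 0 := by
      have h := congrArg (fun v => v ⬝ᵥ c₂) hq0
      simpa [hqdef, add_dotProduct, smul_dotProduct, smul_eq_mul,
             hd22, ← htdef] using h
    have hne0 : 1 - t * t ≠ 0 := by rw [← hnn]; exact hn0
    have hg2 : g 2 = 0 := by
      have h : g 2 * (1 - t * t) = 0 := by linear_combination e2 - t * e1
      rcases mul_eq_zero.mp h with h' | h'
      · exact h'
      · exact absurd h' hne0
    have hg1 : g 1 = 0 := by rw [hg2, zero_mul, add_zero] at e1; exact e1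
    intro i
    fin_cases i <;> assumption
  -- membership of the generators
  have hzero1 : (0 : Matrix (Fin 2) (Fin 2) ℂ) ∈ tangentSetS A₁ := by
    simp [tangentSetS]
  have hzero2 : (0 : Matrix (Fin 2) (Fin 2) ℂ) ∈ tangentSetS A₂ := by
    simp [tangentSetS]
  have hmemA : ∀ y : Fin 3 → ℝ, y ⬝ᵥ c₁ = 0 → L y ∈ MS := by
    intro y hy
    have hvA : phiL y * A₁ * A₁⁻¹ = phiL y := by
      rw [hinv1, mul_neg, Matrix.mul_assoc, hq1]; simp
    refine ⟨phiL y * A₁, ⟨?_, ?_, ?_⟩, 0, hzero2, ?_⟩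
    · rw [hvA, star_phiL]
    · rw [hvA, trace_phiL]
    · rw [← hA1r, trace_phiL_mul, hy]
      simp
    · rw [hLapp, hP, mul_zero, add_zero, Matrix.mul_assoc]
  have hmemB : ∀ y : Fin 3 → ℝ, y ⬝ᵥ c₂ = 0 → L y ∈ MS := by
    intro y hy
    set w₃ := -(A₁ * (phiL y * P)) with hw3
    have hPA : P * A₁ = C := by rw [hP, hC]
    have hwA : w₃ * A₂⁻¹ = -(A₁ * (phiL y * A₁)) := by
      rw [hw3, hinv2, hP, neg_mul_neg]
      simp only [Matrix.mul_assoc]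
      rw [hq2]
      simp [mul_neg, Matrix.mul_assoc]
    refine ⟨0, hzero1, w₃, ⟨?_, ?_, ?_⟩, ?_⟩
    · rw [hwA]
      simp [Matrix.star_mul, hs1, star_phiL, Matrix.mul_assoc, mul_neg, neg_mul]
    · rw [hwA, Matrix.trace_neg, Matrix.trace_mul_comm, Matrix.mul_assoc, hq1]
      simp [trace_phiL]
    · rw [hw3, Matrix.trace_neg, Matrix.trace_mul_comm, Matrix.mul_assoc, hPA, ← hCr,
          trace_phiL_mul, hy]
      simp
    · rw [hLapp, hw3, Matrix.zero_mul, zero_add, mul_neg, hl1, neg_neg]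
  have hmem : ∀ i, L (x i) ∈ MS := by
    intro i
    fin_cases i
    · exact hmemA n (by rw [dotProduct_comm]; exact hdc1n)
    · exact hmemA (c₁ ⨯₃ n) (by rw [dotProduct_comm]; exact dot_self_cross c₁ n)
    · exact hmemB (c₂ ⨯₃ n) (by rw [dotProduct_comm]; exact dot_self_cross c₂ n)
  -- upper bound
  have hub : Submodule.span ℝ MS ≤ LinearMap.range L := by
    rw [Submodule.span_le]
    rintro m ⟨v, ⟨hv1, hv2, hv3⟩, w, ⟨hw1, hw2, hw3⟩, rfl⟩
    set sv := v * A₁⁻¹ with hsv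
    set sw := w * A₂⁻¹ with hsw
    have hsvA : sv * A₁ = v := by
      rw [hsv, hinv1, mul_neg, neg_mul, Matrix.mul_assoc, hq1]; simp
    have hswA : sw * A₂ = w := by
      rw [hsw, hinv2, mul_neg, neg_mul, Matrix.mul_assoc, hq2]; simp
    set u := sv + A₁ * sw * (-A₁) with hu
    have hu_star : star u = -u := by
      have h1 : star u = -sv + A₁ * (sw * A₁) := by
        simp [hu, star_add, Matrix.star_mul, hs1, hv1, hw1, Matrix.mul_assoc]
      rw [h1, hu]
      simp only [neg_add, mul_neg, neg_neg, Matrix.mul_assoc]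
    have hu_tr : u.trace = 0 := by
      rw [hu, Matrix.trace_add, hv2]
      rw [Matrix.mul_assoc, Matrix.trace_mul_comm, Matrix.mul_assoc, neg_mul, hq1,
          neg_neg, mul_one, hw2]
      simp
    refine ⟨su2coords u, ?_⟩
    rw [hLapp, phiL_coords hu_star hu_tr, hu, hP, add_mul]
    congr 1
    · rw [← Matrix.mul_assoc, hsvA]
    · rw [Matrix.mul_assoc, Matrix.mul_assoc, neg_mul, ← Matrix.mul_assoc A₁ A₁ A₂, hq1,
          neg_mul, one_mul, neg_neg, ← Matrix.mul_assoc, Matrix.mul_assoc, hswA]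
  -- assembly
  have hfin1 : Module.finrank ℝ (Submodule.span ℝ MS) ≤ 3 := by
    calc Module.finrank ℝ (Submodule.span ℝ MS)
        ≤ Module.finrank ℝ (LinearMap.range L) := Submodule.finrank_mono hub
      _ ≤ Module.finrank ℝ (Fin 3 → ℝ) := LinearMap.finrank_range_le L
      _ = 3 := by simp
  have hliL : LinearIndependent ℝ (fun i => L (x i)) := hli.map' L hLinj
  have hsr : Set.range (fun i => L (x i)) ⊆ MS := by
    rintro _ ⟨i, rfl⟩; exact hmem i
  have hfin2 : 3 ≤ Module.finrank ℝ (Submodule.span ℝ MS) := by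
    calc (3 : ℕ) = Module.finrank ℝ (Submodule.span ℝ (Set.range (fun i => L (x i)))) := by
          rw [finrank_span_eq_card hliL]; simp
      _ ≤ Module.finrank ℝ (Submodule.span ℝ MS) :=
          Submodule.finrank_mono (Submodule.span_mono hsr)
  omega

end SU2Aux
end

section
/- Let σ = σ₁ⁿ act on S × S (where S is the 2-sphere of trace-zero SU(2) matrices) via σ₁(a, b) = (b, b a b⁻¹). For a, b lying on a common great circle parametrized by angle with b at angle 0 and a at angle α, one has σ(α, 0) = (-(n-1)α, -nα) (angles mod 2π); in particular (a, b) is a fixed point of σ if and only if n·α ≡ 0 mod 2π. -/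
/-- The point at angle `θ` on the great circle through `J` in the `2`-sphere `S` of
trace-zero `SU(2)` matrices. -/
noncomputable def circPt (θ : ℝ) : Matrix (Fin 2) (Fin 2) ℂ :=
  !![Complex.I * Real.cos θ, (Real.sin θ : ℂ);
     -(Real.sin θ : ℂ), -(Complex.I * Real.cos θ)]

/-- The elementary braid `σ₁` acting on `S × S` by `σ₁(a, b) = (b, b·a·b⁻¹)`. -/
noncomputable def sigma1 (p : Matrix (Fin 2) (Fin 2) ℂ × Matrix (Fin 2) (Fin 2) ℂ) :
    Matrix (Fin 2) (Fin 2) ℂ × Matrix (Fin 2) (Fin 2) ℂ :=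
  (p.2, p.2 * p.1 * p.2⁻¹)

lemma circPt_mul_neg_self (θ : ℝ) : circPt θ * -circPt θ = 1 := by
  have h : Complex.cos θ^2 + Complex.sin θ^2 = 1 := Complex.cos_sq_add_sin_sq θ
  ext i j
  fin_cases i <;> fin_cases j <;>
    simp [circPt, Matrix.mul_apply, Fin.sum_univ_two, Matrix.one_apply,
      Complex.ofReal_sin, Complex.ofReal_cos] <;>
    ring_nf <;> simp only [Complex.I_sq] <;>
    first | linear_combination h | linear_combination -h | ring

lemma circPt_conj (θ φ : ℝ) : circPt θ * circPt φ * circPt θ = -circPt (2*θ - φ) := by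
  have h : Real.cos θ^2 + Real.sin θ^2 = 1 := Real.cos_sq_add_sin_sq θ
  ext i j
  fin_cases i <;> fin_cases j <;>
    simp only [circPt, Matrix.mul_apply, Fin.sum_univ_two, Real.cos_sub, Real.sin_sub,
      Real.cos_two_mul, Real.sin_two_mul, Fin.isValue, Matrix.cons_val', Matrix.cons_val_zero,
      Matrix.cons_val_one, Matrix.head_cons, Matrix.head_fin_const, Matrix.neg_apply,
      Matrix.cons_val_fin_one, Matrix.empty_val', Matrix.cons_val_one] <;>
    simp [Complex.ext_iff, ← Complex.ofReal_pow, -Complex.ofReal_cos, -Complex.ofReal_sin] <;>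
    push_cast [-Complex.ofReal_cos, -Complex.ofReal_sin] <;>
    first
      | linear_combination (Real.cos φ - Real.sin φ) * h
      | linear_combination (Real.sin φ - Real.cos φ) * h
      | linear_combination (Real.cos φ + Real.sin φ) * h
      | linear_combination (-Real.cos φ - Real.sin φ) * h
      | linear_combination Real.cos φ * h
      | linear_combination -Real.cos φ * h
      | linear_combination Real.sin φ * h
      | linear_combination -Real.sin φ * h
      | ring

lemma circPt_eq_iff (x y : ℝ) : circPt x = circPt y ↔ ∃ k : ℤ, x = y + 2*Real.pi*k := by
  constructor
  · intro hxy
    have hs : Real.sin x = Real.sin y := by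
      have h0 := congrFun (congrFun hxy 0) 1
      simp [circPt, -Complex.ofReal_sin, -Complex.ofReal_cos] at h0
      exact_mod_cast h0
    have hc : Real.cos x = Real.cos y := by
      have h0 := congrFun (congrFun hxy 0) 0
      simp only [circPt, Matrix.of_apply, Matrix.cons_val', Matrix.cons_val_zero, Matrix.empty_val',
        Matrix.cons_val_fin_one] at h0
      have : (Real.cos x : ℂ) = Real.cos y := by
        field_simp at h0
        exact_mod_cast h0
      exact_mod_cast this
    have hexp : Complex.exp (x*Complex.I) = Complex.exp (y*Complex.I) := by
      rw [Complex.exp_mul_I, Complex.exp_mul_I, ← Complex.ofReal_cos, ← Complex.ofReal_cos,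
        ← Complex.ofReal_sin, ← Complex.ofReal_sin, hs, hc]
    rw [Complex.exp_eq_exp_iff_exists_int] at hexp
    obtain ⟨k, hk⟩ := hexp
    refine ⟨k, ?_⟩
    have h2 : (x:ℂ) = (y:ℂ) + 2*(Real.pi:ℂ)*(k:ℂ) := by
      linear_combination (-Complex.I) * hk + ((x:ℂ) - y - 2*(Real.pi:ℂ)*k) * Complex.I_sq
    exact_mod_cast h2
  · rintro ⟨k, rfl⟩
    have hc : Real.cos (y + 2*Real.pi*k) = Real.cos y := by
      rw [show y + 2*Real.pi*k = y + k*(2*Real.pi) by ring, Real.cos_add_int_mul_two_pi]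
    have hs : Real.sin (y + 2*Real.pi*k) = Real.sin y := by
      rw [show y + 2*Real.pi*k = y + k*(2*Real.pi) by ring, Real.sin_add_int_mul_two_pi]
    simp [circPt, hc, hs]

/-- Let `σ = σ₁ⁿ` act on `S × S` via `σ₁(a,b) = (b, b·a·b⁻¹)`.  For `a, b` on a common great
circle (any such pair is `(g·P(α)·g⁻¹, g·P(0)·g⁻¹)` for some `g ∈ SU(2)`, where `P`
parametrizes the circle through `J` by arc length), one has
`σ(α, 0) = (-(n-1)α, -nα)` in the angle coordinates; in particular `(a,b)` is a fixed
point of `σ` if and only if `n·α ≡ 0 (mod 2π)`. -/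
theorem sigma1_iterate_on_great_circle (g : Matrix (Fin 2) (Fin 2) ℂ)
    (hg : g ∈ Matrix.specialUnitaryGroup (Fin 2) ℂ) (n : ℕ) (hn : 1 ≤ n) (α : ℝ) :
    sigma1^[n] (g * circPt α * g⁻¹, g * circPt 0 * g⁻¹) =
      (g * circPt (-((n : ℝ) - 1) * α) * g⁻¹, g * circPt (-(n : ℝ) * α) * g⁻¹) ∧
    (sigma1^[n] (g * circPt α * g⁻¹, g * circPt 0 * g⁻¹) =
        (g * circPt α * g⁻¹, g * circPt 0 * g⁻¹) ↔
      ∃ k : ℤ, (n : ℝ) * α = 2 * Real.pi * k) := by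
  have hdet : IsUnit g.det := by
    rw [(Matrix.mem_specialUnitaryGroup_iff.mp hg).2]; exact isUnit_one
  have hginv : g * g⁻¹ = 1 := Matrix.mul_nonsing_inv g hdet
  have hinvg : g⁻¹ * g = 1 := Matrix.nonsing_inv_mul g hdet
  set f : ℝ → Matrix (Fin 2) (Fin 2) ℂ := fun θ => g * circPt θ * g⁻¹ with hf
  have hfinv : ∀ θ, (f θ)⁻¹ = g * (-circPt θ) * g⁻¹ := by
    intro θ
    apply Matrix.inv_eq_right_inv
    calc g * circPt θ * g⁻¹ * (g * -circPt θ * g⁻¹)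
        = g * (circPt θ * (g⁻¹ * g) * -circPt θ) * g⁻¹ := by noncomm_ring
      _ = 1 := by rw [hinvg, mul_one, circPt_mul_neg_self, mul_one, hginv]
  have hstep : ∀ a b : ℝ, sigma1 (f a, f b) = (f b, f (2*b - a)) := by
    intro a b
    refine Prod.ext rfl ?_
    show f b * f a * (f b)⁻¹ = f (2*b - a)
    rw [hfinv]
    calc g * circPt b * g⁻¹ * (g * circPt a * g⁻¹) * (g * -circPt b * g⁻¹)
        = g * (circPt b * (g⁻¹ * g) * circPt a * (g⁻¹ * g) * -circPt b) * g⁻¹ := by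
          noncomm_ring
      _ = g * -(circPt b * circPt a * circPt b) * g⁻¹ := by
          rw [hinvg]; noncomm_ring
      _ = f (2*b - a) := by rw [circPt_conj]; simp [hf]
  have hiter : ∀ m : ℕ, 1 ≤ m →
      sigma1^[m] (f α, f 0) = (f (-((m : ℝ) - 1) * α), f (-(m : ℝ) * α)) := by
    intro m hm
    induction m, hm using Nat.le_induction with
    | base =>
      rw [Function.iterate_one, hstep]
      exact Prod.ext (congrArg f (by push_cast; ring)) (congrArg f (by push_cast; ring))
    | succ m hm ih =>
      rw [Function.iterate_succ_apply', ih, hstep]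
      exact Prod.ext (congrArg f (by push_cast; ring)) (congrArg f (by push_cast; ring))
  have hfeq : ∀ x y : ℝ, f x = f y ↔ circPt x = circPt y := by
    intro x y
    constructor
    · intro h
      have h2 : ∀ z:ℝ, g⁻¹ * (g * circPt z * g⁻¹) * g = circPt z := fun z => by
        calc g⁻¹ * (g * circPt z * g⁻¹) * g = (g⁻¹*g) * circPt z * (g⁻¹*g) := by noncomm_ring
          _ = circPt z := by rw [hinvg]; noncomm_ring
      have h3 : g⁻¹ * (f x) * g = g⁻¹ * (f y) * g := by rw [h]
      simp only [hf] at h3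
      rw [← h2 x, ← h2 y]
      exact h3
    · intro h; rw [hf]; simp only; rw [h]
  refine ⟨hiter n hn, ?_⟩
  rw [hiter n hn, Prod.mk.injEq, hfeq, hfeq, circPt_eq_iff, circPt_eq_iff]
  constructor
  · rintro ⟨-, k, hk⟩
    exact ⟨-k, by push_cast at hk ⊢; linarith⟩
  · rintro ⟨k, hk⟩
    refine ⟨⟨-k, by push_cast; linarith⟩, ⟨-k, by push_cast; linarith⟩⟩
end
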